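/- Let L and L′ be complex Lie algebras admitting bases realizing the bracket patterns d₆(1,1) and d₆(1,0) respectively. Then L and L′ are isomorphic as Lie algebras over ℂ. -/

import Mathlib

/-- `Realizes L c` means that the complex Lie algebra `L` admits a basis `e₁, …, e₅`
(indexed by `Fin 5`) in which the brackets of basis vectors are given by the
structure constants `c`, i.e. `⁅eᵢ, eⱼ⁆ = ∑ₖ c i j k • eₖ` for all `i < j`,
all brackets of basis vectors being determined by these via antisymmetry. -/
def Realizes (L : Type) [LieRing L] [LieAlgebra ℂ L]
    (c : Fin 5 → Fin 5 → Fin 5 → ℂ) : Prop :=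
  ∃ e : Module.Basis (Fin 5) ℂ L, ∀ i j : Fin 5, i < j →
    ⁅e i, e j⁆ = ∑ k, c i j k • e k

/-- The bracket pattern `d₆(p,q)`: `[e₂,e₄]=e₁+p·e₂`, `[e₃,e₄]=e₂+q·e₃`, `[e₁,e₅]=−p·e₁`, `[e₂,e₅]=e₁`, `[e₃,e₅]=e₂+(q−p)·e₃`, all other brackets zero. -/
def d6 (p q : ℂ) : Fin 5 → Fin 5 → Fin 5 → ℂ := fun i j =>
  if i = 1 ∧ j = 3 then ![1, p, 0, 0, 0]
  else if i = 2 ∧ j = 3 then ![0, 1, q, 0, 0]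
  else if i = 0 ∧ j = 4 then ![-p, 0, 0, 0, 0]
  else if i = 1 ∧ j = 4 then ![1, 0, 0, 0, 0]
  else if i = 2 ∧ j = 4 then ![0, 1, q - p, 0, 0]
  else 0

/-- Two Lie algebras realizing the same structure constants (vanishing for `¬ i < j`)
are isomorphic. -/
theorem realizes_iso (L L' : Type) [LieRing L] [LieAlgebra ℂ L] [LieRing L'] [LieAlgebra ℂ L']
    (c : Fin 5 → Fin 5 → Fin 5 → ℂ) (hc : ∀ i j : Fin 5, ¬ i < j → c i j = 0)
    (hL : Realizes L c) (hL' : Realizes L' c) : Nonempty (L ≃ₗ⁅ℂ⁆ L') := by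
  obtain ⟨e, he⟩ := hL
  obtain ⟨e', he'⟩ := hL'
  set g : L ≃ₗ[ℂ] L' := e.equiv e' (Equiv.refl _) with hg
  have hge : ∀ i, g (e i) = e' i := fun i => e.equiv_apply i e' (Equiv.refl _)
  have key : ∀ i j, g ⁅e i, e j⁆ = ⁅g (e i), g (e j)⁆ := by
    intro i j
    rw [hge, hge]
    rcases lt_trichotomy i j with h | h | h
    · rw [he i j h, he' i j h, map_sum]
      simp [hge]
    · subst h; simp
    · rw [← lie_skew, ← lie_skew (e' i), he j i h, he' j i h, map_neg, map_sum]
      simp [hge]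
  have bil : ∀ x y : L, g ⁅x, y⁆ = ⁅g x, g y⁆ := by
    let B1 : L →ₗ[ℂ] L →ₗ[ℂ] L' := LinearMap.mk₂ ℂ (fun x y => g ⁅x, y⁆)
      (by intros; simp only [add_lie, map_add]) (by intros; simp only [smul_lie, map_smul])
      (by intros; simp only [lie_add, map_add]) (by intros; simp only [lie_smul, map_smul])
    let B2 : L →ₗ[ℂ] L →ₗ[ℂ] L' := LinearMap.mk₂ ℂ (fun x y => ⁅g x, g y⁆)
      (by intros; simp only [map_add, add_lie]) (by intros; simp only [map_smul, smul_lie])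
      (by intros; simp only [map_add, lie_add]) (by intros; simp only [map_smul, lie_smul])
    have hB : B1 = B2 := by
      apply e.ext; intro i
      apply e.ext; intro j
      exact key i j
    intro x y
    exact DFunLike.congr_fun (DFunLike.congr_fun hB x) y
  exact ⟨{ g with map_lie' := fun {x y} => bil x y }⟩

set_option maxHeartbeats 1000000 in
/-- A Lie algebra realizing `d6 1 0` also realizes `d6 1 1`. -/
theorem realizes_d6_11_of_10 (L' : Type) [LieRing L'] [LieAlgebra ℂ L']
    (hL' : Realizes L' (d6 1 0)) : Realizes L' (d6 1 1) := by
  obtain ⟨e, he⟩ := hL'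
  have h01 : ⁅e 0, e 1⁆ = 0 := by
    rw [he 0 1 (by decide)]; simp [d6, Fin.sum_univ_five]
  have h02 : ⁅e 0, e 2⁆ = 0 := by
    rw [he 0 2 (by decide)]; simp [d6, Fin.sum_univ_five]
  have h03 : ⁅e 0, e 3⁆ = 0 := by
    rw [he 0 3 (by decide)]; simp [d6, Fin.sum_univ_five]
  have h12 : ⁅e 1, e 2⁆ = 0 := by
    rw [he 1 2 (by decide)]; simp [d6, Fin.sum_univ_five]
  have h34 : ⁅e 3, e 4⁆ = 0 := by
    rw [he 3 4 (by decide)]; simp [d6, Fin.sum_univ_five]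
  have h13 : ⁅e 1, e 3⁆ = e 0 + e 1 := by
    rw [he 1 3 (by decide)]; simp [d6, Fin.sum_univ_five]
  have h23 : ⁅e 2, e 3⁆ = e 1 := by
    rw [he 2 3 (by decide)]; simp [d6, Fin.sum_univ_five]
  have h04 : ⁅e 0, e 4⁆ = -e 0 := by
    rw [he 0 4 (by decide)]; simp [d6, Fin.sum_univ_five]
  have h14 : ⁅e 1, e 4⁆ = e 0 := by
    rw [he 1 4 (by decide)]; simp [d6, Fin.sum_univ_five]
  have h24 : ⁅e 2, e 4⁆ = e 1 - e 2 := by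
    rw [he 2 4 (by decide)]; simp [d6, Fin.sum_univ_five]
    module
  -- change of basis matrix
  set B : Matrix (Fin 5) (Fin 5) ℂ :=
    !![1,0,0,0,0; 1,-1,0,0,0; 0,0,1,0,0; 0,0,0,0,-1; 0,0,0,-1,0] with hB
  have hdet : IsUnit B.det := by
    have : B.det = 1 := by
      simp [hB, Matrix.det_succ_row_zero, Fin.sum_univ_succ]
    rw [this]; exact isUnit_one
  set f : Module.Basis (Fin 5) ℂ L' := e.map (Matrix.toLinearEquiv e B hdet) with hf
  have hfv : ∀ j, f j = ∑ i, B i j • e i := by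
    intro j
    rw [hf, Module.Basis.map_apply, Matrix.toLinearEquiv_apply, Matrix.toLin_self]
  have f0 : f 0 = e 0 + e 1 := by rw [hfv]; simp [hB, Fin.sum_univ_five, Matrix.vecHead, Matrix.vecTail]
  have f1 : f 1 = -e 1 := by rw [hfv]; simp [hB, Fin.sum_univ_five, Matrix.vecHead, Matrix.vecTail]
  have f2 : f 2 = e 2 := by rw [hfv]; simp [hB, Fin.sum_univ_five, Matrix.vecHead, Matrix.vecTail]
  have f3 : f 3 = -e 4 := by rw [hfv]; simp [hB, Fin.sum_univ_five, Matrix.vecHead, Matrix.vecTail]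
  have f4 : f 4 = -e 3 := by rw [hfv]; simp [hB, Fin.sum_univ_five, Matrix.vecHead, Matrix.vecTail]
  have h10 : ⁅e 1, e 0⁆ = 0 := by rw [← lie_skew, h01, neg_zero]
  have h20 : ⁅e 2, e 0⁆ = 0 := by rw [← lie_skew, h02, neg_zero]
  have h30 : ⁅e 3, e 0⁆ = 0 := by rw [← lie_skew, h03, neg_zero]
  have h21 : ⁅e 2, e 1⁆ = 0 := by rw [← lie_skew, h12, neg_zero]
  have h43 : ⁅e 4, e 3⁆ = 0 := by rw [← lie_skew, h34, neg_zero]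
  have h31 : ⁅e 3, e 1⁆ = -(e 0 + e 1) := by rw [← lie_skew, h13]
  have h32 : ⁅e 3, e 2⁆ = -e 1 := by rw [← lie_skew, h23]
  have h40 : ⁅e 4, e 0⁆ = e 0 := by rw [← lie_skew, h04, neg_neg]
  have h41 : ⁅e 4, e 1⁆ = -e 0 := by rw [← lie_skew, h14]
  have h42 : ⁅e 4, e 2⁆ = -(e 1 - e 2) := by rw [← lie_skew, h24]
  refine ⟨f, ?_⟩
  intro i j hij
  fin_cases i <;> fin_cases j <;>
    first
    | exact absurd hij (by decide)
    | (try simp only [f0, f1, f2, f3, f4, lie_add, add_lie, lie_neg, neg_lie, lie_sub, sub_lie,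
         h01, h02, h03, h12, h34, h43, h13, h23, h04, h14, h24, lie_self]
       simp [d6, Fin.sum_univ_five, f0, f1, f2, f3, f4,
         h10, h20, h30, h21, h43, h31, h32, h40, h41, h42, lie_add, add_lie, lie_neg, neg_lie,
         lie_sub, sub_lie, h01, h02, h03, h12, h34, h13, h23, h04, h14, h24]
       try module)

/-- Lie algebras realizing the patterns `d₆(1,1)` and `d₆(1,0)` are
isomorphic. -/
theorem d6_11_iso_d6_10
    (L L' : Type) [LieRing L] [LieAlgebra ℂ L] [LieRing L'] [LieAlgebra ℂ L']
    (hL : Realizes L (d6 1 1)) (hL' : Realizes L' (d6 1 0)) :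
    Nonempty (L ≃ₗ⁅ℂ⁆ L') := by
  refine realizes_iso L L' (d6 1 1) ?_ hL (realizes_d6_11_of_10 L' hL')
  intro i j h
  fin_cases i <;> fin_cases j <;>
    first
    | exact absurd (by decide) h
    | (funext k; simp [d6])
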